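/- Let a ∈ C²(ℝ) with a(s) ≥ ν > 0 for all s ∈ ℝ, let k > 0 and a₁ > 0, and assume lim_{s→+∞} a(s)/s^k = a₁. Let g be the solution of g'(s) = 1/√(a(g(s))), g(0) = 0, and let c₁ = ((k+2)/(2√a₁))^{2/(k+2)}. Then: lim_{s→+∞} s·(g'(s))² = 0 if k > 2; lim_{s→+∞} s·(g'(s))² = 1/(a₁ c₁^k) if k = 2; and s·(g'(s))² → +∞ as s → +∞ if 0 < k < 2. -/

import Mathlib

open Filter Real Topology

lemma my_tendsto_div_of_deriv (f f' : ℝ → ℝ) (L : ℝ)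
    (hd : ∀ᶠ s in atTop, HasDerivAt f (f' s) s)
    (hf' : Tendsto f' atTop (𝓝 L)) :
    Tendsto (fun s => f s / s) atTop (𝓝 L) := by
  rw [Metric.tendsto_atTop]
  intro ε hε
  have h2 : ∀ᶠ s in atTop, HasDerivAt f (f' s) s ∧ |f' s - L| < ε / 2 := by
    filter_upwards [hd, hf'.eventually (Metric.ball_mem_nhds L (half_pos hε))] with s h1 h2
    exact ⟨h1, by simpa [Real.dist_eq] using h2⟩
  obtain ⟨A', hA'⟩ := eventually_atTop.1 h2
  set A := max A' 0 with hAdef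
  have hA : ∀ b ≥ A, HasDerivAt f (f' b) b ∧ |f' b - L| < ε / 2 :=
    fun b hb => hA' b (le_trans (le_max_left _ _) hb)
  have hA0 : 0 ≤ A := le_max_right _ _
  set C := |f A - L * A| with hC
  have hC0 : 0 ≤ C := abs_nonneg _
  refine ⟨max A (2 * C / ε + 1), fun s hs => ?_⟩
  have hsA : A ≤ s := le_trans (le_max_left _ _) hs
  have hs1 : 2 * C / ε + 1 ≤ s := le_trans (le_max_right _ _) hs
  have hspos : 0 < s := by
    have : (0:ℝ) ≤ 2 * C / ε := by positivity
    linarith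
  have key : |f s - f A - L * (s - A)| ≤ ε / 2 * (s - A) := by
    have := Convex.norm_image_sub_le_of_norm_hasDerivWithin_le
      (f := fun t => f t - L * t) (f' := fun t => f' t - L) (s := Set.Icc A s)
      (fun x hx => by have h := ((hA x hx.1).1.sub ((hasDerivAt_id x).const_mul L)).hasDerivWithinAt (s := Set.Icc A s); rw [mul_one] at h; exact h)
      (fun x hx => le_of_lt (by simpa [Real.norm_eq_abs] using (hA x hx.1).2))
      (convex_Icc A s) (Set.left_mem_Icc.2 hsA) (Set.right_mem_Icc.2 hsA)
    simp only [Real.norm_eq_abs] at this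
    rw [show |s - A| = s - A from abs_of_nonneg (by linarith)] at this
    calc |f s - f A - L * (s - A)| = |(f s - L * s) - (f A - L * A)| := by ring_nf
      _ ≤ ε / 2 * (s - A) := this
  have hfs : |f s - L * s| ≤ ε / 2 * (s - A) + C := by
    calc |f s - L * s| = |(f s - f A - L * (s - A)) + (f A - L * A)| := by ring_nf
      _ ≤ |f s - f A - L * (s - A)| + C := abs_add_le _ _
      _ ≤ ε / 2 * (s - A) + C := by linarith
  rw [Real.dist_eq]
  have heq : f s / s - L = (f s - L * s) / s := by field_simp
  rw [heq, abs_div, abs_of_pos hspos, div_lt_iff₀ hspos]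
  have h2 : C < ε / 2 * s := by
    have h3 : 2 * C / ε < s := by linarith
    rw [div_lt_iff₀ hε] at h3; nlinarith
  nlinarith

theorem s_gprime_sq_limit
    (a : ℝ → ℝ) (ν : ℝ) (hν : 0 < ν)
    (ha : ContDiff ℝ 2 a) (hbound : ∀ s, ν ≤ a s)
    (k a₁ : ℝ) (hk : 0 < k) (ha₁ : 0 < a₁)
    (hlim : Tendsto (fun s : ℝ => a s / s ^ k) atTop (𝓝 a₁))
    (g : ℝ → ℝ)
    (hg : ∀ s, HasDerivAt g (1 / Real.sqrt (a (g s))) s) (hg0 : g 0 = 0)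
    (c₁ : ℝ) (hc₁ : c₁ = ((k + 2) / (2 * Real.sqrt a₁)) ^ (2 / (k + 2))) :
    (2 < k → Tendsto (fun s : ℝ => s * (deriv g s) ^ 2) atTop (𝓝 0)) ∧
    (k = 2 → Tendsto (fun s : ℝ => s * (deriv g s) ^ 2) atTop (𝓝 (1 / (a₁ * c₁ ^ k)))) ∧
    (k < 2 → Tendsto (fun s : ℝ => s * (deriv g s) ^ 2) atTop atTop) := by
  have hapos : ∀ x, 0 < a x := fun x => lt_of_lt_of_le hν (hbound x)
  have hsqpos : ∀ x, 0 < Real.sqrt (a (g x)) := fun x => Real.sqrt_pos.2 (hapos _)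
  have hderiv : ∀ s, deriv g s = 1 / Real.sqrt (a (g s)) := fun s => (hg s).deriv
  have hgmono : StrictMono g := by
    apply strictMono_of_deriv_pos
    intro x; rw [hderiv x]; exact div_pos one_pos (hsqpos x)
  -- g tends to atTop
  have hgtop : Tendsto g atTop atTop := by
    apply tendsto_atTop_atTop_of_monotone hgmono.monotone
    intro b
    by_contra hcon
    push_neg at hcon
    set M := max b 1 with hM
    have hM1 : (1:ℝ) ≤ M := le_max_right _ _
    have hMlt : ∀ s, g s < M := fun s => lt_of_lt_of_le (hcon s) (le_max_left _ _)
    obtain ⟨z, hz, hzmax⟩ := (isCompact_Icc (a := (0:ℝ)) (b := M)).exists_isMaxOn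
      (Set.nonempty_Icc.2 (by linarith)) (ha.continuous.continuousOn)
    rw [isMaxOn_iff] at hzmax
    have hApos : 0 < a z := hapos z
    have hsA : 0 < Real.sqrt (a z) := Real.sqrt_pos.2 hApos
    have hgnn : ∀ s, 0 ≤ s → 0 ≤ g s := by
      intro s hs
      calc (0:ℝ) = g 0 := hg0.symm
        _ ≤ g s := hgmono.monotone hs
    have hbd : ∀ s, 0 ≤ s → a (g s) ≤ a z := by
      intro s hs
      exact hzmax (g s) ⟨hgnn s hs, (hMlt s).le⟩
    have hD : ∀ x, HasDerivAt (fun s => g s - s * (Real.sqrt (a z))⁻¹)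
        (1 / Real.sqrt (a (g x)) - (Real.sqrt (a z))⁻¹) x := by
      intro x
      have h := (hg x).sub ((hasDerivAt_id x).mul_const ((Real.sqrt (a z))⁻¹)); rw [one_mul] at h; exact h
    have hmono : MonotoneOn (fun s => g s - s * (Real.sqrt (a z))⁻¹) (Set.Ici 0) := by
      apply monotoneOn_of_deriv_nonneg (convex_Ici 0)
      · exact (Differentiable.continuous fun x => (hD x).differentiableAt).continuousOn
      · exact fun x _ => (hD x).differentiableAt.differentiableWithinAt
      · intro x hx
        rw [interior_Ici] at hx
        rw [(hD x).deriv]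
        have h1 : Real.sqrt (a (g x)) ≤ Real.sqrt (a z) := Real.sqrt_le_sqrt (hbd x hx.le)
        have h2 : (Real.sqrt (a z))⁻¹ ≤ (Real.sqrt (a (g x)))⁻¹ :=
          inv_anti₀ (hsqpos x) h1
        rw [one_div]
        linarith
    have hkey := hmono (Set.mem_Ici.2 (le_refl 0)) (Set.mem_Ici.2 (by positivity : (0:ℝ) ≤ M * Real.sqrt (a z))) (by positivity)
    simp only [hg0] at hkey
    have : M ≤ g (M * Real.sqrt (a z)) := by
      have hne : Real.sqrt (a z) ≠ 0 := ne_of_gt hsA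
      have : M * Real.sqrt (a z) * (Real.sqrt (a z))⁻¹ = M := by field_simp
      nlinarith [hkey, this]
    exact absurd (hMlt (M * Real.sqrt (a z))) (not_lt.2 this)
  -- composition limit
  have hgpos : ∀ᶠ s in atTop, 0 < g s := hgtop.eventually_gt_atTop 0
  have hcomp : Tendsto (fun s => a (g s) / g s ^ k) atTop (𝓝 a₁) := hlim.comp hgtop
  have T2 : Tendsto (fun s => g s ^ k / a (g s)) atTop (𝓝 a₁⁻¹) := by
    have := hcomp.inv₀ (ne_of_gt ha₁)
    simpa [inv_div] using this
  set L := (k + 2) / (2 * Real.sqrt a₁) with hLdef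
  have hsa₁ : 0 < Real.sqrt a₁ := Real.sqrt_pos.2 ha₁
  have hL : 0 < L := by positivity
  set φ : ℝ → ℝ := fun s => g s ^ ((k + 2) / 2 : ℝ) with hφdef
  set φ' : ℝ → ℝ := fun s => ((k + 2) / 2 * g s ^ ((k + 2) / 2 - 1 : ℝ)) * (1 / Real.sqrt (a (g s))) with hφ'def
  have hdφ : ∀ᶠ s in atTop, HasDerivAt φ (φ' s) s := by
    filter_upwards [hgpos] with s hs
    exact (Real.hasDerivAt_rpow_const (Or.inl (ne_of_gt hs))).comp s (hg s)
  have hφ'lim : Tendsto φ' atTop (𝓝 L) := by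
    have hsq2 : Tendsto (fun s => Real.sqrt (g s ^ k / a (g s))) atTop (𝓝 (Real.sqrt a₁⁻¹)) :=
      T2.sqrt
    have heq : ∀ᶠ s in atTop, (k + 2) / 2 * Real.sqrt (g s ^ k / a (g s)) = φ' s := by
      filter_upwards [hgpos] with s hs
      have h1 : Real.sqrt (g s ^ k / a (g s)) = g s ^ (k / 2 : ℝ) / Real.sqrt (a (g s)) := by
        rw [Real.sqrt_div (Real.rpow_nonneg hs.le k), Real.sqrt_eq_rpow,
          ← Real.rpow_mul hs.le]
        rw [show (k * (1 / 2) : ℝ) = k / 2 from by ring]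
      rw [h1, hφ'def]
      have h2 : ((k + 2) / 2 - 1 : ℝ) = k / 2 := by ring
      rw [h2]
      field_simp
    have : Tendsto (fun s => (k + 2) / 2 * Real.sqrt (g s ^ k / a (g s))) atTop
        (𝓝 ((k + 2) / 2 * Real.sqrt a₁⁻¹)) := tendsto_const_nhds.mul hsq2
    have hval : (k + 2) / 2 * Real.sqrt a₁⁻¹ = L := by
      rw [Real.sqrt_inv, hLdef]; field_simp
    rw [hval] at this
    exact this.congr' heq
  have hφdiv : Tendsto (fun s => φ s / s) atTop (𝓝 L) :=
    my_tendsto_div_of_deriv φ φ' L hdφ hφ'lim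
  have T1 : Tendsto (fun s => s / φ s) atTop (𝓝 L⁻¹) := by
    have := hφdiv.inv₀ (ne_of_gt hL)
    simpa [inv_div] using this
  have hP : Tendsto (fun s => (s / φ s) * (g s ^ k / a (g s))) atTop (𝓝 (L⁻¹ * a₁⁻¹)) :=
    T1.mul T2
  -- key eventual identity
  have heq : ∀ᶠ s in atTop, (s / φ s) * (g s ^ k / a (g s)) * g s ^ ((2 - k) / 2 : ℝ)
      = s * (deriv g s) ^ 2 := by
    filter_upwards [hgpos] with s hs
    have hA : 0 < a (g s) := hapos _
    rw [hderiv s]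
    have h1 : (1 / Real.sqrt (a (g s))) ^ 2 = (a (g s))⁻¹ := by
      rw [one_div, inv_pow, Real.sq_sqrt hA.le]
    rw [h1]
    have hφpos : (0:ℝ) < g s ^ ((k + 2) / 2 : ℝ) := Real.rpow_pos_of_pos hs _
    have key : g s ^ (k : ℝ) * g s ^ ((2 - k) / 2 : ℝ) = g s ^ ((k + 2) / 2 : ℝ) := by
      rw [← Real.rpow_add hs]
      congr 1
      ring
    rw [hφdef]
    field_simp
    linear_combination s * key
  refine ⟨?_, ?_, ?_⟩
  · intro hk2
    have T3 : Tendsto (fun s => g s ^ ((2 - k) / 2 : ℝ)) atTop (𝓝 0) := by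
      have := (tendsto_rpow_neg_atTop (y := (k - 2) / 2) (by linarith)).comp hgtop
      have he : (fun s => g s ^ (-((k - 2) / 2) : ℝ)) = fun s => g s ^ ((2 - k) / 2 : ℝ) := by
        funext s; ring_nf
      rw [← he]
      exact this
    have := (hP.mul T3).congr' heq
    simpa using this
  · intro hk2
    subst hk2
    have T3 : Tendsto (fun s => g s ^ ((2 - 2) / 2 : ℝ)) atTop (𝓝 1) := by
      simp [Real.rpow_zero]
    have := (hP.mul T3).congr' heq
    have hc : L⁻¹ * a₁⁻¹ * 1 = 1 / (a₁ * c₁ ^ (2:ℝ)) := by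
      have hc2 : c₁ ^ (2:ℝ) = L := by
        rw [hc₁, ← Real.rpow_mul hL.le]
        norm_num
      rw [hc2]
      field_simp
    rw [hc] at this
    exact this
  · intro hk2
    have T3 : Tendsto (fun s => g s ^ ((2 - k) / 2 : ℝ)) atTop atTop :=
      (tendsto_rpow_atTop (by linarith : (0:ℝ) < (2 - k) / 2)).comp hgtop
    have hc : 0 < L⁻¹ * a₁⁻¹ := by positivity
    exact (hP.pos_mul_atTop hc T3).congr' heq
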